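/- With λ(θ) and f(θ) = -log λ(θ) - 2θ - θ log(1-4λ(θ)) as above, f'' = 4λ'/(1-4λ) and θ f'' = 2 + λ'/λ hold for all θ > 0. -/

import Mathlib

open Real Filter Set

noncomputable def _root_.artanh (x : ℝ) : ℝ := (1/2) * Real.log ((1+x)/(1-x))

noncomputable def thetaF (l : ℝ) : ℝ := -1 + _root_.artanh (Real.sqrt (1-4*l)) / Real.sqrt (1-4*l)

lemma artanh_eq {x : ℝ} (h1 : 0 < 1+x) (h2 : 0 < 1-x) :
    _root_.artanh x = (1/2) * (Real.log (1+x) - Real.log (1-x)) := by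
  unfold _root_.artanh
  rw [Real.log_div h1.ne' h2.ne']

lemma artanh_zero : _root_.artanh 0 = 0 := by simp [_root_.artanh]

lemma hasDerivAt_artanh {x : ℝ} (h1 : -1 < x) (h2 : x < 1) :
    HasDerivAt _root_.artanh (1/(1-x^2)) x := by
  have h1' : 0 < 1 + x := by linarith
  have h2' : 0 < 1 - x := by linarith
  have hA : HasDerivAt (fun y : ℝ => 1 + y) 1 x := by
    simpa using (hasDerivAt_id x).const_add (1:ℝ)
  have hB : HasDerivAt (fun y : ℝ => 1 - y) (-1) x := by
    exact (hasDerivAt_id x).const_sub (1:ℝ)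
  have H := ((hA.log h1'.ne').sub (hB.log h2'.ne')).const_mul (1/2 : ℝ)
  have hx2 : (0:ℝ) < 1 - x^2 := by nlinarith
  have Hval : (1/2 : ℝ) * (1 / (1+x) - -1 / (1-x)) = 1/(1-x^2) := by
    field_simp
    nlinarith [sq_nonneg x]
  rw [Hval] at H
  apply H.congr_of_eventuallyEq
  filter_upwards [Ioo_mem_nhds h1 h2] with y hy
  exact artanh_eq (by linarith [hy.1]) (by linarith [hy.2])

lemma artanh_gt_self {s : ℝ} (h0 : 0 < s) (h1 : s < 1) : s < _root_.artanh s := by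
  have hmono : StrictMonoOn (fun x => _root_.artanh x - x) (Ico 0 1) := by
    apply strictMonoOn_of_deriv_pos (convex_Ico 0 1)
    · intro x hx
      have hx1 : -1 < x := by linarith [hx.1]
      exact (((hasDerivAt_artanh hx1 hx.2).sub (hasDerivAt_id x)).continuousAt).continuousWithinAt
    · intro x hx
      rw [interior_Ico] at hx
      have hx1 : -1 < x := by linarith [hx.1]
      have hd : HasDerivAt (fun x => _root_.artanh x - x) (1/(1-x^2) - 1) x :=
        (hasDerivAt_artanh hx1 hx.2).sub (hasDerivAt_id x)
      rw [hd.deriv]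
      have hx2 : (0:ℝ) < 1 - x^2 := by nlinarith [hx.1, hx.2]
      have hx2' : 1 - x^2 < 1 := by nlinarith [hx.1]
      have : 1 < 1/(1-x^2) := (one_lt_div hx2).mpr hx2'
      linarith
  have := hmono ⟨le_refl 0, by norm_num⟩ ⟨h0.le, h1⟩ h0
  simp [_root_.artanh_zero] at this
  linarith

lemma artanh_lt {s : ℝ} (h0 : 0 < s) (h1 : s < 1) : _root_.artanh s < s / (1 - s^2) := by
  have hmono : StrictMonoOn (fun x => x/(1-x^2) - _root_.artanh x) (Ico 0 1) := by
    apply strictMonoOn_of_deriv_pos (convex_Ico 0 1)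
    · intro x hx
      have hx1 : -1 < x := by linarith [hx.1]
      have hx2 : (0:ℝ) < 1 - x^2 := by nlinarith [hx.1, hx.2]
      have hq : HasDerivAt (fun x : ℝ => x/(1-x^2)) ((1*(1-x^2) - x*(-((2:ℕ)*x^(2-1))))/(1-x^2)^2) x :=
        (hasDerivAt_id x).div (((hasDerivAt_pow 2 x).const_sub 1)) hx2.ne'
      exact ((hq.sub (hasDerivAt_artanh hx1 hx.2)).continuousAt).continuousWithinAt
    · intro x hx
      rw [interior_Ico] at hx
      have hx1 : -1 < x := by linarith [hx.1]
      have hx2 : (0:ℝ) < 1 - x^2 := by nlinarith [hx.1, hx.2]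
      have hq : HasDerivAt (fun x : ℝ => x/(1-x^2)) ((1*(1-x^2) - x*(-((2:ℕ)*x^(2-1))))/(1-x^2)^2) x :=
        (hasDerivAt_id x).div (((hasDerivAt_pow 2 x).const_sub 1)) hx2.ne'
      have hd : HasDerivAt (fun x => x/(1-x^2) - _root_.artanh x)
          ((1*(1-x^2) - x*(-((2:ℕ)*x^(2-1))))/(1-x^2)^2 - 1/(1-x^2)) x :=
        hq.sub (hasDerivAt_artanh hx1 hx.2)
      rw [hd.deriv]
      have key : (1*(1-x^2) - x*(-((2:ℕ)*x^(2-1))))/(1-x^2)^2 - 1/(1-x^2) = 2*x^2/(1-x^2)^2 := by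
        field_simp
        ring
      rw [key]
      have hxne : x ≠ 0 := ne_of_gt hx.1
      positivity
  have := hmono ⟨le_refl 0, by norm_num⟩ ⟨h0.le, h1⟩ h0
  simp [_root_.artanh_zero] at this
  linarith

lemma sqrt_facts {l : ℝ} (hl : l ∈ Set.Ioo (0:ℝ) (1/4)) :
    0 < Real.sqrt (1-4*l) ∧ Real.sqrt (1-4*l) < 1 ∧ (Real.sqrt (1-4*l))^2 = 1-4*l := by
  have h1 : (0:ℝ) < 1 - 4*l := by linarith [hl.2]
  have h2 : (1:ℝ) - 4*l < 1 := by linarith [hl.1]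
  refine ⟨Real.sqrt_pos.mpr h1, ?_, Real.sq_sqrt h1.le⟩
  calc Real.sqrt (1-4*l) < Real.sqrt 1 := by
        exact Real.sqrt_lt_sqrt h1.le h2
    _ = 1 := Real.sqrt_one

lemma thetaF_pos {l : ℝ} (hl : l ∈ Set.Ioo (0:ℝ) (1/4)) : 0 < thetaF l := by
  obtain ⟨hs0, hs1, _⟩ := sqrt_facts hl
  have := artanh_gt_self hs0 hs1
  have h : 1 < _root_.artanh (Real.sqrt (1-4*l)) / Real.sqrt (1-4*l) := (one_lt_div hs0).mpr this
  unfold thetaF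
  linarith

lemma artanh_sqrt_eq {l : ℝ} (hl : l ∈ Set.Ioo (0:ℝ) (1/4)) :
    _root_.artanh (Real.sqrt (1-4*l)) = Real.sqrt (1-4*l) * (thetaF l + 1) := by
  obtain ⟨hs0, _, _⟩ := sqrt_facts hl
  unfold thetaF
  field_simp
  ring

noncomputable def Tl (l : ℝ) : ℝ := (4*l*(thetaF l + 1) - 1)/(2*l*(1-4*l))

lemma Tl_neg {l : ℝ} (hl : l ∈ Set.Ioo (0:ℝ) (1/4)) : Tl l < 0 := by
  obtain ⟨hs0, hs1, hs2⟩ := sqrt_facts hl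
  have hub := artanh_lt hs0 hs1
  rw [artanh_sqrt_eq hl, hs2] at hub
  have h4l : (0:ℝ) < 1 - 4*l := by linarith [hl.2]
  have hl0 := hl.1
  have he : Real.sqrt (1-4*l)/(1-(1-4*l)) = Real.sqrt (1-4*l) * (1/(4*l)) := by
    field_simp
    ring
  rw [he] at hub
  have hub' : thetaF l + 1 < 1/(4*l) := lt_of_mul_lt_mul_left hub hs0.le
  have hnum : 4*l*(thetaF l + 1) - 1 < 0 := by
    have h2 : 4*l*(thetaF l + 1) < 4*l*(1/(4*l)) :=
      mul_lt_mul_of_pos_left hub' (by linarith)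
    have h41 : 4*l*(1/(4*l)) = 1 := by field_simp
    linarith
  apply div_neg_of_neg_of_pos hnum
  have := hl.1
  nlinarith [hl.2]

lemma hasDerivAt_thetaF {l : ℝ} (hl : l ∈ Set.Ioo (0:ℝ) (1/4)) :
    HasDerivAt thetaF (Tl l) l := by
  obtain ⟨hs0, hs1, hs2⟩ := sqrt_facts hl
  set s := Real.sqrt (1-4*l) with hs
  have h4l : (0:ℝ) < 1 - 4*l := by linarith [hl.2]
  have hinner : HasDerivAt (fun t : ℝ => Real.sqrt (1-4*t)) ((-4) / (2*s)) l := by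
    have h : HasDerivAt (fun t : ℝ => 1 - 4*t) (-4) l := by
      simpa using ((hasDerivAt_id l).const_mul (4:ℝ)).const_sub (1:ℝ)
    exact h.sqrt h4l.ne'
  have houter : HasDerivAt (fun u : ℝ => _root_.artanh u / u)
      ((1/(1-s^2) * s - _root_.artanh s * 1)/s^2) s :=
    (hasDerivAt_artanh (by linarith) hs1).div (hasDerivAt_id s) hs0.ne'
  have hcomp := houter.comp l hinner
  have : HasDerivAt thetaF ((1/(1-s^2) * s - _root_.artanh s * 1)/s^2 * ((-4) / (2*s))) l := by
    apply HasDerivAt.congr_of_eventuallyEq (hcomp.const_add (-1))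
    filter_upwards with t
    simp [thetaF, Function.comp]
  convert this using 1
  have key : ∀ S T : ℝ, 0 < S → S^2 = 1-4*l →
      (4*l*(T+1)-1)/(2*l*(1-4*l)) = (1/(1-S^2)*S - S*(T+1)*1)/S^2 * (-4/(2*S)) := by
    intro S T hS hSeq
    rw [hSeq]
    have hl0 := hl.1
    field_simp
    ring
  rw [Tl, artanh_sqrt_eq hl]
  exact key s (thetaF l) hs0 hs2

lemma strictAntiOn_thetaF : StrictAntiOn thetaF (Set.Ioo (0:ℝ) (1/4)) := by
  apply strictAntiOn_of_deriv_neg (convex_Ioo 0 (1/4))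
  · exact fun x hx => (hasDerivAt_thetaF hx).continuousAt.continuousWithinAt
  · intro x hx
    rw [interior_Ioo] at hx
    rw [(hasDerivAt_thetaF hx).deriv]
    exact Tl_neg hx

theorem stmt12 (lam : ℝ → ℝ)
    (hmem : ∀ θ > (0:ℝ), lam θ ∈ Set.Ioo (0:ℝ) (1/4))
    (hinv : ∀ θ > (0:ℝ), thetaF (lam θ) = θ)
    (f : ℝ → ℝ)
    (hf : ∀ θ, f θ = -Real.log (lam θ) - 2*θ - θ * Real.log (1 - 4 * lam θ)) :
    ∀ θ > (0:ℝ),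
      deriv (deriv f) θ = 4 * deriv lam θ / (1 - 4 * lam θ) ∧
      θ * deriv (deriv f) θ = 2 + deriv lam θ / lam θ := by
  -- lam is strictly antitone on (0,∞)
  have hanti : StrictAntiOn lam (Set.Ioi (0:ℝ)) := by
    intro a ha b hb hab
    by_contra h
    push_neg at h
    rcases h.eq_or_lt with heq | hlt
    · have : a = b := by rw [← hinv a ha, ← hinv b hb, heq]
      exact absurd this (ne_of_lt hab)
    · have := strictAntiOn_thetaF (hmem a ha) (hmem b hb) hlt
      rw [hinv a ha, hinv b hb] at this
      exact absurd hab (not_lt.mpr this.le)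
  -- lam is surjective onto (0,1/4)
  have hsurj : ∀ l ∈ Set.Ioo (0:ℝ) (1/4), ∃ θ > (0:ℝ), lam θ = l := by
    intro l hl
    have hθ := thetaF_pos hl
    refine ⟨thetaF l, hθ, ?_⟩
    exact strictAntiOn_thetaF.injOn (hmem _ hθ) hl (hinv _ hθ)
  -- lam is continuous on (0,∞)
  have hcont : ∀ θ > (0:ℝ), ContinuousAt lam θ := by
    intro θ hθ
    have hmono : MonotoneOn (fun t => -lam t) (Set.Ioi (0:ℝ)) := by
      intro a ha b hb hab
      rcases hab.eq_or_lt with heq | hlt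
      · rw [heq]
      · simp only [neg_le_neg_iff]
        exact (hanti ha hb hlt).le
    have himg : (fun t => -lam t) '' (Set.Ioi (0:ℝ)) ∈ nhds (-lam θ) := by
      apply Filter.mem_of_superset (Ioo_mem_nhds (a := -(1/4:ℝ)) (b := (0:ℝ)) _ _)
      · intro y hy
        obtain ⟨t, ht, hlt⟩ := hsurj (-y) ⟨by linarith [hy.2], by linarith [hy.1]⟩
        exact ⟨t, ht, by simp [hlt]⟩
      · linarith [(hmem θ hθ).2]
      · simp only [neg_neg, Left.neg_neg_iff]
        exact (hmem θ hθ).1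
    have h1 : ContinuousAt (fun t => -lam t) θ :=
      continuousAt_of_monotoneOn_of_image_mem_nhds hmono (Ioi_mem_nhds hθ) himg
    have := h1.neg
    simpa only [Pi.neg_def, neg_neg] using this
  -- derivative of lam
  have hlamderiv : ∀ θ > (0:ℝ), HasDerivAt lam (Tl (lam θ))⁻¹ θ := by
    intro θ hθ
    apply HasDerivAt.of_local_left_inverse (hcont θ hθ) (hasDerivAt_thetaF (hmem θ hθ))
      (Tl_neg (hmem θ hθ)).ne
    filter_upwards [Ioi_mem_nhds hθ] with y hy
    exact hinv y hy
  -- useful facts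
  have hfact : ∀ θ > (0:ℝ), (Tl (lam θ))⁻¹ = 2*lam θ*(1-4*lam θ)/(4*lam θ*(θ+1)-1) := by
    intro θ hθ
    rw [Tl, hinv θ hθ, inv_div]
  have hNneg : ∀ θ > (0:ℝ), 4*lam θ*(θ+1)-1 < 0 := by
    intro θ hθ
    have h1 := Tl_neg (hmem θ hθ)
    rw [Tl, hinv θ hθ] at h1
    have hd : (0:ℝ) < 2*lam θ*(1-4*lam θ) := by
      have := (hmem θ hθ).1; have := (hmem θ hθ).2
      nlinarith
    by_contra h
    push_neg at h
    have := div_nonneg h hd.le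
    linarith
  -- first derivative of f
  have hf1 : ∀ θ > (0:ℝ), HasDerivAt f (-Real.log (1 - 4 * lam θ)) θ := by
    intro θ hθ
    have hl0 := (hmem θ hθ).1
    have hl4 : (0:ℝ) < 1 - 4*lam θ := by linarith [(hmem θ hθ).2]
    set L := (Tl (lam θ))⁻¹ with hL
    have hlam := hlamderiv θ hθ
    have h1 : HasDerivAt (fun t => Real.log (lam t)) (L / lam θ) θ := hlam.log hl0.ne'
    have h2 : HasDerivAt (fun t => 1 - 4 * lam t) (-(4*L)) θ := by
      simpa using (hlam.const_mul (4:ℝ)).const_sub (1:ℝ)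
    have h3 := h2.log hl4.ne'
    have h4 : HasDerivAt (fun t => t * Real.log (1 - 4 * lam t))
        (1 * Real.log (1 - 4 * lam θ) + θ * (-(4*L)/(1-4*lam θ))) θ :=
      (hasDerivAt_id θ).mul h3
    have h5 : HasDerivAt (fun t => -Real.log (lam t) - 2*t - t * Real.log (1 - 4 * lam t))
        (-(L / lam θ) - 2*1 - (1 * Real.log (1 - 4 * lam θ) + θ * (-(4*L)/(1-4*lam θ)))) θ :=
      (h1.neg.sub ((hasDerivAt_id θ).const_mul 2)).sub h4
    have hfe : f = fun t => -Real.log (lam t) - 2*t - t * Real.log (1 - 4 * lam t) :=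
      funext hf
    rw [hfe]
    convert h5 using 1
    have hN := hNneg θ hθ
    have key : -(L / lam θ) + 4*θ*L/(1-4*lam θ) = 2 := by
      rw [hL, hfact θ hθ]
      have hNne : 4*lam θ*(θ+1)-1 ≠ 0 := hN.ne
      rw [div_div, mul_div_assoc', div_div, neg_div', div_add_div _ _ (by positivity) (by positivity), div_eq_iff (by positivity)]
      ring
    have : θ * (-(4*L)/(1-4*lam θ)) = -(4*θ*L/(1-4*lam θ)) := by ring
    rw [this]
    linarith [key]
  intro θ hθ
  have hl0 := (hmem θ hθ).1
  have hl4 : (0:ℝ) < 1 - 4*lam θ := by linarith [(hmem θ hθ).2]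
  have hN := hNneg θ hθ
  set L := (Tl (lam θ))⁻¹ with hL
  have hlam := hlamderiv θ hθ
  -- second derivative
  have h2 : HasDerivAt (fun t => 1 - 4 * lam t) (-(4*L)) θ := by
    simpa using (hlam.const_mul (4:ℝ)).const_sub (1:ℝ)
  have h6 : HasDerivAt (fun t => -Real.log (1 - 4 * lam t)) (4*L/(1-4*lam θ)) θ := by
    have := (h2.log hl4.ne').neg
    rw [neg_div, neg_neg] at this
    exact this
  have h7 : HasDerivAt (deriv f) (4*L/(1-4*lam θ)) θ := by
    apply h6.congr_of_eventuallyEq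
    filter_upwards [Ioi_mem_nhds hθ] with y hy
    exact (hf1 y hy).deriv
  have hd2 : deriv (deriv f) θ = 4*L/(1-4*lam θ)  := h7.deriv
  have hdlam : deriv lam θ = L := hlam.deriv
  constructor
  · rw [hd2, hdlam]
  · rw [hd2, hdlam, hL, hfact θ hθ]
    have hNne : 4*lam θ*(θ+1)-1 ≠ 0 := hN.ne
    field_simp [hNne]
    ring
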